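/- Sharpness of the constant 3 in Zygmund's inequality: there exist a sequence (λ_n) of positive integers and a sequence of functions u_n(x) := Σ_{m ∈ S_{λ_n}} a^{(n)}_m e^{2πi m·x} with complex coefficients supported in S_{λ_n} := {m ∈ ℤ² : |m|² = λ_n}, such that Σ_{m ∈ S_{λ_n}} |a^{(n)}_m|² = 1 for every n and ∫_{[0,1]²} |u_n(x)|⁴ dx → 3 as n → ∞. -/

import Mathlib

open MeasureTheory Real Filter

noncomputable section


/-! ### Elementary integral computations -/

abbrev ZygI2 : Set (ℝ × ℝ) := Set.Icc (0:ℝ) 1 ×ˢ Set.Icc (0:ℝ) 1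

def ZygF (m : ℤ × ℤ) (x : ℝ × ℝ) : ℂ :=
  Complex.exp (2 * (Real.pi:ℂ) * Complex.I * ((m.1 : ℂ) * (x.1 : ℝ) + (m.2 : ℂ) * (x.2 : ℝ)))

lemma Zyg_int1d (k : ℤ) :
    ∫ x in Set.Icc (0:ℝ) 1, Complex.exp (2 * (Real.pi:ℂ) * Complex.I * (k * x))
      = if k = 0 then 1 else 0 := by
  rw [MeasureTheory.integral_Icc_eq_integral_Ioc, ← intervalIntegral.integral_of_le zero_le_one]
  by_cases hk : k = 0
  · simp [hk]
  · have hc : 2 * (Real.pi:ℂ) * Complex.I * k ≠ 0 := by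
      simp [Complex.I_ne_zero, Real.pi_ne_zero, hk, Complex.ofReal_ne_zero]
    have := integral_exp_mul_complex (a := (0:ℝ)) (b := 1) hc
    simp only [hk, if_false]
    rw [show (fun x : ℝ => Complex.exp (2 * (Real.pi:ℂ) * Complex.I * (k * x)))
        = (fun x : ℝ => Complex.exp ((2 * (Real.pi:ℂ) * Complex.I * k) * x)) by
      funext x; ring_nf]
    rw [this]
    have h1 : Complex.exp (2 * (Real.pi:ℂ) * Complex.I * k) = 1 := by
      rw [show 2 * (Real.pi:ℂ) * Complex.I * k = k * (2 * Real.pi * Complex.I) by ring]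
      exact Complex.exp_int_mul_two_pi_mul_I k
    norm_num [h1]

lemma Zyg_int2d (k : ℤ × ℤ) :
    ∫ x in ZygI2, ZygF k x = if k = 0 then 1 else 0 := by
  have hsplit : ∀ x : ℝ × ℝ, ZygF k x
      = Complex.exp (2 * (Real.pi:ℂ) * Complex.I * ((k.1:ℂ) * x.1)) *
        Complex.exp (2 * (Real.pi:ℂ) * Complex.I * ((k.2:ℂ) * x.2)) := by
    intro x; rw [ZygF, ← Complex.exp_add]; ring_nf
  rw [Measure.volume_eq_prod]
  calc ∫ x in Set.Icc (0:ℝ) 1 ×ˢ Set.Icc (0:ℝ) 1, ZygF k x ∂(volume.prod volume)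
      = ∫ x in Set.Icc (0:ℝ) 1 ×ˢ Set.Icc (0:ℝ) 1,
        (fun y : ℝ => Complex.exp (2 * (Real.pi:ℂ) * Complex.I * ((k.1:ℂ) * y))) x.1 *
        (fun y : ℝ => Complex.exp (2 * (Real.pi:ℂ) * Complex.I * ((k.2:ℂ) * y))) x.2
        ∂(volume.prod volume) := by
        apply setIntegral_congr_fun (by measurability)
        intro x _; exact hsplit x
    _ = (∫ y in Set.Icc (0:ℝ) 1, Complex.exp (2 * (Real.pi:ℂ) * Complex.I * ((k.1:ℂ) * y))) *
        (∫ y in Set.Icc (0:ℝ) 1, Complex.exp (2 * (Real.pi:ℂ) * Complex.I * ((k.2:ℂ) * y))) :=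
        MeasureTheory.setIntegral_prod_mul
          (fun y : ℝ => Complex.exp (2 * (Real.pi:ℂ) * Complex.I * ((k.1:ℂ) * y)))
          (fun y : ℝ => Complex.exp (2 * (Real.pi:ℂ) * Complex.I * ((k.2:ℂ) * y)))
          (Set.Icc (0:ℝ) 1) (Set.Icc (0:ℝ) 1)
    _ = (if k.1 = 0 then 1 else 0) * (if k.2 = 0 then 1 else 0) := by
        rw [Zyg_int1d, Zyg_int1d]
    _ = if k = 0 then 1 else 0 := by
        rcases k with ⟨k1, k2⟩
        by_cases h1 : k1 = 0 <;> by_cases h2 : k2 = 0 <;> simp [h1, h2, Prod.ext_iff]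

lemma ZygF_mul (a b : ℤ × ℤ) (x : ℝ × ℝ) : ZygF a x * ZygF b x = ZygF (a + b) x := by
  rw [ZygF, ZygF, ZygF, ← Complex.exp_add]
  congr 1
  push_cast [Prod.fst_add, Prod.snd_add]
  ring

lemma ZygF_conj (m : ℤ × ℤ) (x : ℝ × ℝ) : (starRingEnd ℂ) (ZygF m x) = ZygF (-m) x := by
  rw [ZygF, ZygF, ← Complex.exp_conj]
  congr 1
  simp only [map_mul, map_add, Complex.conj_ofReal, Complex.conj_I, map_ofNat,
    map_intCast, Prod.fst_neg, Prod.snd_neg, Int.cast_neg]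
  ring

lemma ZygF_cont (m : ℤ × ℤ) : Continuous (ZygF m) := by
  unfold ZygF; fun_prop

lemma ZygF_integrableOn (m : ℤ × ℤ) : IntegrableOn (ZygF m) ZygI2 :=
  ((ZygF_cont m).continuousOn).integrableOn_compact (isCompact_Icc.prod isCompact_Icc)

/-! ### Expansion of the fourth power -/

lemma Zyg_expand_pointwise (S : Finset (ℤ × ℤ)) (c : ℝ) (x : ℝ × ℝ) :
    ((∑ m ∈ S, (c:ℂ) * ZygF m x) * (starRingEnd ℂ) (∑ m ∈ S, (c:ℂ) * ZygF m x))^2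
    = ∑ m1 ∈ S, ∑ m2 ∈ S, ∑ m3 ∈ S, ∑ m4 ∈ S,
        (c:ℂ)^4 * ZygF (m1 + m2 - m3 - m4) x := by
  have hconj : (starRingEnd ℂ) (∑ m ∈ S, (c:ℂ) * ZygF m x) = ∑ m ∈ S, (c:ℂ) * ZygF (-m) x := by
    rw [map_sum]
    refine Finset.sum_congr rfl fun m _ => ?_
    rw [map_mul, ZygF_conj, Complex.conj_ofReal]
  rw [hconj]
  have hAA : (∑ m ∈ S, (c:ℂ) * ZygF m x) * (∑ m ∈ S, (c:ℂ) * ZygF m x)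
      = ∑ m1 ∈ S, ∑ m2 ∈ S, (c:ℂ)^2 * ZygF (m1 + m2) x := by
    rw [Finset.sum_mul_sum]
    refine Finset.sum_congr rfl fun m1 _ => Finset.sum_congr rfl fun m2 _ => ?_
    rw [show ((c:ℂ) * ZygF m1 x) * ((c:ℂ) * ZygF m2 x) = (c:ℂ)^2 * (ZygF m1 x * ZygF m2 x) by
      ring, ZygF_mul]
  have hBB : (∑ m ∈ S, (c:ℂ) * ZygF (-m) x) * (∑ m ∈ S, (c:ℂ) * ZygF (-m) x)
      = ∑ m3 ∈ S, ∑ m4 ∈ S, (c:ℂ)^2 * ZygF (-m3 + -m4) x := by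
    rw [Finset.sum_mul_sum]
    refine Finset.sum_congr rfl fun m3 _ => Finset.sum_congr rfl fun m4 _ => ?_
    rw [show ((c:ℂ) * ZygF (-m3) x) * ((c:ℂ) * ZygF (-m4) x)
      = (c:ℂ)^2 * (ZygF (-m3) x * ZygF (-m4) x) by ring, ZygF_mul]
  calc ((∑ m ∈ S, (c:ℂ) * ZygF m x) * (∑ m ∈ S, (c:ℂ) * ZygF (-m) x))^2
      = ((∑ m ∈ S, (c:ℂ) * ZygF m x) * (∑ m ∈ S, (c:ℂ) * ZygF m x)) *
        ((∑ m ∈ S, (c:ℂ) * ZygF (-m) x) * (∑ m ∈ S, (c:ℂ) * ZygF (-m) x)) := by ring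
    _ = (∑ m1 ∈ S, ∑ m2 ∈ S, (c:ℂ)^2 * ZygF (m1 + m2) x) *
        (∑ m3 ∈ S, ∑ m4 ∈ S, (c:ℂ)^2 * ZygF (-m3 + -m4) x) := by rw [hAA, hBB]
    _ = ∑ m1 ∈ S, ∑ m3 ∈ S, (∑ m2 ∈ S, (c:ℂ)^2 * ZygF (m1 + m2) x) *
        (∑ m4 ∈ S, (c:ℂ)^2 * ZygF (-m3 + -m4) x) := by rw [Finset.sum_mul_sum]
    _ = ∑ m1 ∈ S, ∑ m3 ∈ S, ∑ m2 ∈ S, ∑ m4 ∈ S,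
        ((c:ℂ)^2 * ZygF (m1 + m2) x) * ((c:ℂ)^2 * ZygF (-m3 + -m4) x) := by
        refine Finset.sum_congr rfl fun m1 _ => Finset.sum_congr rfl fun m3 _ => ?_
        rw [Finset.sum_mul_sum]
    _ = ∑ m1 ∈ S, ∑ m2 ∈ S, ∑ m3 ∈ S, ∑ m4 ∈ S,
        (c:ℂ)^4 * ZygF (m1 + m2 - m3 - m4) x := by
        refine Finset.sum_congr rfl fun m1 _ => ?_
        rw [Finset.sum_comm]
        refine Finset.sum_congr rfl fun m2 _ => Finset.sum_congr rfl fun m3 _ =>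
          Finset.sum_congr rfl fun m4 _ => ?_
        rw [show ((c:ℂ)^2 * ZygF (m1 + m2) x) * ((c:ℂ)^2 * ZygF (-m3 + -m4) x)
          = (c:ℂ)^4 * (ZygF (m1 + m2) x * ZygF (-m3 + -m4) x) by ring, ZygF_mul]
        congr 2
        abel

lemma Zyg_integral_quad_sum (S : Finset (ℤ × ℤ)) (c : ℝ) :
    ∫ x in ZygI2, (∑ m1 ∈ S, ∑ m2 ∈ S, ∑ m3 ∈ S, ∑ m4 ∈ S,
        (c:ℂ)^4 * ZygF (m1 + m2 - m3 - m4) x)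
    = (c:ℂ)^4 * ∑ m1 ∈ S, ∑ m2 ∈ S, ∑ m3 ∈ S, ∑ m4 ∈ S,
        (if m1 + m2 = m3 + m4 then (1:ℂ) else 0) := by
  have hint : ∀ k : ℤ × ℤ, IntegrableOn (fun x => (c:ℂ)^4 * ZygF k x) ZygI2 :=
    fun k => (ZygF_integrableOn k).const_mul _
  have h1 : ∀ (T : Finset (ℤ × ℤ)) (f : ℤ × ℤ → (ℝ × ℝ) → ℂ),
      (∀ m, IntegrableOn (f m) ZygI2) →
      ∫ x in ZygI2, ∑ m ∈ T, f m x = ∑ m ∈ T, ∫ x in ZygI2, f m x :=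
    fun T f hf => integral_finset_sum T (fun m _ => hf m)
  have hintsum : ∀ (T : Finset (ℤ × ℤ)) (f : ℤ × ℤ → (ℝ × ℝ) → ℂ),
      (∀ m, IntegrableOn (f m) ZygI2) →
      IntegrableOn (fun x => ∑ m ∈ T, f m x) ZygI2 :=
    fun T f hf => MeasureTheory.integrable_finset_sum T (fun m _ => hf m)
  rw [h1 _ _ (fun m1 => hintsum _ _ (fun m2 => hintsum _ _ (fun m3 => hintsum _ _ (fun m4 =>
    hint _))))]
  rw [Finset.mul_sum]
  refine Finset.sum_congr rfl fun m1 _ => ?_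
  rw [h1 _ _ (fun m2 => hintsum _ _ (fun m3 => hintsum _ _ (fun m4 => hint _))), Finset.mul_sum]
  refine Finset.sum_congr rfl fun m2 _ => ?_
  rw [h1 _ _ (fun m3 => hintsum _ _ (fun m4 => hint _)), Finset.mul_sum]
  refine Finset.sum_congr rfl fun m3 _ => ?_
  rw [h1 _ _ (fun m4 => hint _), Finset.mul_sum]
  refine Finset.sum_congr rfl fun m4 _ => ?_
  rw [MeasureTheory.integral_const_mul, Zyg_int2d]
  simp [sub_sub, sub_eq_zero]

/-! ### The chord lemma and counting -/

lemma Zyg_sq_add_sq_eq_zero {x y : ℤ} (h : x^2 + y^2 = 0) : x = 0 ∧ y = 0 := by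
  have hx := sq_nonneg x
  have hy := sq_nonneg y
  have h1 : x^2 = 0 := by linarith
  have h2 : y^2 = 0 := by linarith
  exact ⟨pow_eq_zero_iff two_ne_zero |>.mp h1, pow_eq_zero_iff two_ne_zero |>.mp h2⟩

lemma Zyg_chordZ (lam : ℤ) (a1 b1 a2 b2 a3 b3 a4 b4 : ℤ)
    (h1 : a1^2 + b1^2 = lam) (h2 : a2^2 + b2^2 = lam)
    (h3 : a3^2 + b3^2 = lam) (h4 : a4^2 + b4^2 = lam)
    (hsa : a1 + a2 = a3 + a4) (hsb : b1 + b2 = b3 + b4)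
    (hs : ¬(a1 + a2 = 0 ∧ b1 + b2 = 0)) :
    (a3 = a1 ∧ b3 = b1 ∧ a4 = a2 ∧ b4 = b2) ∨
    (a3 = a2 ∧ b3 = b2 ∧ a4 = a1 ∧ b4 = b1) := by
  set s1 := a1 + a2 with hs1
  set s2 := b1 + b2 with hs2
  have e1 : s1 * (a1 - a2) + s2 * (b1 - b2) = 0 := by linear_combination h1 - h2
  have e2 : s1 * (a3 - a4) + s2 * (b3 - b4) = 0 := by
    linear_combination h3 - h4 + (a3 - a4) * hsa + (b3 - b4) * hsb
  have e3 : (a1 - a2)^2 + (b1 - b2)^2 = (a3 - a4)^2 + (b3 - b4)^2 := by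
    linear_combination 2*h1 + 2*h2 - 2*h3 - 2*h4 - (a1 + a2 + a3 + a4) * hsa
      - (b1 + b2 + b3 + b4) * hsb
  have hcr : (a1 - a2) * (b3 - b4) - (b1 - b2) * (a3 - a4) = 0 := by
    have hc1 : s1 * ((a1 - a2) * (b3 - b4) - (b1 - b2) * (a3 - a4)) = 0 := by
      linear_combination (b3 - b4) * e1 - (b1 - b2) * e2
    have hc2 : s2 * ((a1 - a2) * (b3 - b4) - (b1 - b2) * (a3 - a4)) = 0 := by
      linear_combination (a1 - a2) * e2 - (a3 - a4) * e1
    rcases mul_eq_zero.mp hc1 with h | h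
    · rcases mul_eq_zero.mp hc2 with h' | h'
      · exact absurd ⟨h, h'⟩ hs
      · exact h'
    · exact h
  have hd : ((a1-a2)*(a3-a4) + (b1-b2)*(b3-b4) - ((a1-a2)^2 + (b1-b2)^2)) *
      ((a1-a2)*(a3-a4) + (b1-b2)*(b3-b4) + ((a1-a2)^2 + (b1-b2)^2)) = 0 := by
    linear_combination (-((a1-a2)^2 + (b1-b2)^2)) * e3 -
      ((a1-a2)*(b3-b4) - (b1-b2)*(a3-a4)) * hcr
  rcases mul_eq_zero.mp hd with h | h
  · left
    have hz : (a1 - a2 - (a3 - a4))^2 + (b1 - b2 - (b3 - b4))^2 = 0 := by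
      linear_combination -2 * h - e3
    obtain ⟨ha, hb⟩ := Zyg_sq_add_sq_eq_zero hz
    have ha' : a1 - a2 = a3 - a4 := by linarith
    have hb' : b1 - b2 = b3 - b4 := by linarith
    omega
  · right
    have hz : (a1 - a2 + (a3 - a4))^2 + (b1 - b2 + (b3 - b4))^2 = 0 := by
      linear_combination 2 * h - e3
    obtain ⟨ha, hb⟩ := Zyg_sq_add_sq_eq_zero hz
    have ha' : a1 - a2 = -(a3 - a4) := by linarith
    have hb' : b1 - b2 = -(b3 - b4) := by linarith
    omega

lemma Zyg_chord (lam : ℤ) (m1 m2 m3 m4 : ℤ × ℤ)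
    (h1 : m1.1^2 + m1.2^2 = lam) (h2 : m2.1^2 + m2.2^2 = lam)
    (h3 : m3.1^2 + m3.2^2 = lam) (h4 : m4.1^2 + m4.2^2 = lam)
    (hsum : m1 + m2 = m3 + m4) (hs : m1 + m2 ≠ 0) :
    (m3 = m1 ∧ m4 = m2) ∨ (m3 = m2 ∧ m4 = m1) := by
  have hsa : m1.1 + m2.1 = m3.1 + m4.1 := congrArg Prod.fst hsum
  have hsb : m1.2 + m2.2 = m3.2 + m4.2 := congrArg Prod.snd hsum
  have hs' : ¬(m1.1 + m2.1 = 0 ∧ m1.2 + m2.2 = 0) := by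
    intro ⟨ha, hb⟩
    exact hs (Prod.ext ha hb)
  rcases Zyg_chordZ lam m1.1 m1.2 m2.1 m2.2 m3.1 m3.2 m4.1 m4.2 h1 h2 h3 h4 hsa hsb hs' with
    ⟨u, v, w, z⟩ | ⟨u, v, w, z⟩
  · exact Or.inl ⟨Prod.ext u v, Prod.ext w z⟩
  · exact Or.inr ⟨Prod.ext u v, Prod.ext w z⟩

lemma Zyg_count_quad (lam : ℤ) (hlam : 0 < lam) (S : Finset (ℤ × ℤ))
    (hS : ∀ m : ℤ × ℤ, m ∈ S ↔ m.1^2 + m.2^2 = lam) :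
    (∑ m1 ∈ S, ∑ m2 ∈ S, ∑ m3 ∈ S, ∑ m4 ∈ S, (if m1 + m2 = m3 + m4 then (1:ℂ) else 0))
    = 3 * (S.card : ℂ)^2 - 3 * (S.card : ℂ) := by
  have hsym : ∀ m ∈ S, -m ∈ S := by
    intro m hm
    rw [hS] at hm ⊢
    simpa using hm
  have hm0 : ∀ m ∈ S, m ≠ 0 := by
    intro m hm h0
    rw [hS, h0] at hm
    simp at hm
    omega
  set N := (S.card : ℂ) with hN
  have inner : ∀ m1 ∈ S, ∀ m2 ∈ S,
      (∑ m3 ∈ S, ∑ m4 ∈ S, (if m1 + m2 = m3 + m4 then (1:ℂ) else 0))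
      = if m1 + m2 = 0 then N else (if m1 = m2 then 1 else 2) := by
    intro m1 h1 m2 h2
    have step : ∀ m3 : ℤ × ℤ, (∑ m4 ∈ S, (if m1 + m2 = m3 + m4 then (1:ℂ) else 0))
        = if m1 + m2 - m3 ∈ S then 1 else 0 := by
      intro m3
      rw [show (fun m4 => (if m1 + m2 = m3 + m4 then (1:ℂ) else 0))
          = (fun m4 => (if m4 = m1 + m2 - m3 then (1:ℂ) else 0)) from funext fun m4 => by
        congr 1
        · simp only [eq_iff_iff]
          constructor
          · intro h; rw [h]; exact (add_sub_cancel_left m3 m4).symm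
          · intro h; rw [h]; abel]
      exact Finset.sum_ite_eq' S (m1 + m2 - m3) (fun _ => (1:ℂ))
    simp only [step]
    by_cases h0 : m1 + m2 = 0
    · rw [if_pos h0]
      calc (∑ m3 ∈ S, if m1 + m2 - m3 ∈ S then (1:ℂ) else 0) = ∑ m3 ∈ S, (1:ℂ) := by
            refine Finset.sum_congr rfl fun m3 h3 => ?_
            rw [if_pos]
            rw [h0, zero_sub]
            exact hsym m3 h3
        _ = N := by simp [hN]
    · rw [if_neg h0]
      have key : ∀ m3 ∈ S, (m1 + m2 - m3 ∈ S) ↔ (m3 = m1 ∨ m3 = m2) := by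
        intro m3 h3
        constructor
        · intro h4
          rcases Zyg_chord lam m1 m2 m3 (m1 + m2 - m3) ((hS m1).mp h1) ((hS m2).mp h2)
            ((hS m3).mp h3) ((hS _).mp h4) (by abel) h0 with ⟨u, _⟩ | ⟨u, _⟩
          · exact Or.inl u
          · exact Or.inr u
        · intro h
          rcases h with h | h
          · rw [h]
            simpa using h2
          · rw [h]
            simpa using h1
      calc (∑ m3 ∈ S, if m1 + m2 - m3 ∈ S then (1:ℂ) else 0)
          = ∑ m3 ∈ S, (if m3 = m1 ∨ m3 = m2 then (1:ℂ) else 0) := by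
            refine Finset.sum_congr rfl fun m3 h3 => ?_
            by_cases h : m1 + m2 - m3 ∈ S
            · rw [if_pos h, if_pos ((key m3 h3).mp h)]
            · rw [if_neg h, if_neg (fun hc => h ((key m3 h3).mpr hc))]
        _ = ∑ m3 ∈ S, (if m3 ∈ ({m1, m2} : Finset (ℤ×ℤ)) then (1:ℂ) else 0) := by
            refine Finset.sum_congr rfl fun m3 _ => ?_
            simp [Finset.mem_insert, Finset.mem_singleton]
        _ = ∑ m3 ∈ S ∩ {m1, m2}, (1:ℂ) := by rw [Finset.sum_ite_mem]
        _ = ((S ∩ {m1, m2}).card : ℂ) := by simp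
        _ = if m1 = m2 then 1 else 2 := by
            have hss : ({m1, m2} : Finset (ℤ×ℤ)) ⊆ S := by
              intro x hx
              rcases Finset.mem_insert.mp hx with h | h
              · rwa [h]
              · rw [Finset.mem_singleton] at h; rwa [h]
            rw [Finset.inter_eq_right.mpr hss]
            by_cases h : m1 = m2
            · simp [h]
            · rw [Finset.card_pair h]
              simp [h]
  calc (∑ m1 ∈ S, ∑ m2 ∈ S, ∑ m3 ∈ S, ∑ m4 ∈ S, (if m1 + m2 = m3 + m4 then (1:ℂ) else 0))
      = ∑ m1 ∈ S, ∑ m2 ∈ S, (if m1 + m2 = 0 then N else (if m1 = m2 then 1 else 2)) := by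
        refine Finset.sum_congr rfl fun m1 h1 => Finset.sum_congr rfl fun m2 h2 => ?_
        exact inner m1 h1 m2 h2
    _ = ∑ m1 ∈ S, ∑ m2 ∈ S,
        (2 + (if m2 = -m1 then N - 2 else 0) - (if m2 = m1 then (1:ℂ) else 0)) := by
        refine Finset.sum_congr rfl fun m1 h1 => Finset.sum_congr rfl fun m2 h2 => ?_
        by_cases hneg : m2 = -m1
        · have hz : m1 + m2 = 0 := by rw [hneg]; abel
          have hne : m2 ≠ m1 := by
            intro h
            apply hm0 m1 h1
            have : m1 = -m1 := by rw [← hneg, h]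
            have h2' : m1 + m1 = 0 := by
              nth_rewrite 2 [this]
              abel
            rcases m1 with ⟨u, v⟩
            simp only [Prod.mk_add_mk, Prod.mk_eq_zero] at h2' ⊢
            omega
          rw [if_pos hz, if_pos hneg, if_neg hne]
          ring
        · have hz : m1 + m2 ≠ 0 := by
            intro h
            apply hneg
            have h' : m2 + m1 = 0 := by rw [add_comm]; exact h
            exact eq_neg_iff_add_eq_zero.mpr h'
          rw [if_neg hz, if_neg hneg]
          by_cases h : m1 = m2
          · rw [if_pos h, if_pos h.symm]
            ring
          · rw [if_neg h, if_neg (fun hc => h hc.symm)]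
            ring
    _ = (∑ m1 ∈ S, ∑ m2 ∈ S, (2:ℂ)) + (∑ m1 ∈ S, ∑ m2 ∈ S, (if m2 = -m1 then N - 2 else 0))
        - (∑ m1 ∈ S, ∑ m2 ∈ S, (if m2 = m1 then (1:ℂ) else 0)) := by
        simp only [Finset.sum_sub_distrib, Finset.sum_add_distrib]
    _ = 3 * N^2 - 3 * N := by
        have e1 : ∀ m1 ∈ S, (∑ m2 ∈ S, (if m2 = -m1 then N - 2 else 0)) = N - 2 := by
          intro m1 h1
          rw [Finset.sum_ite_eq' S (-m1) (fun _ => N - 2), if_pos (hsym m1 h1)]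
        have e2 : ∀ m1 ∈ S, (∑ m2 ∈ S, (if m2 = m1 then (1:ℂ) else 0)) = 1 := by
          intro m1 h1
          rw [Finset.sum_ite_eq' S m1 (fun _ => (1:ℂ)), if_pos h1]
        rw [Finset.sum_congr rfl e1, Finset.sum_congr rfl e2]
        simp [hN]
        ring

/-! ### Gaussian integer construction of many lattice points -/


abbrev GI := GaussianInt

def wg : GI := ⟨2, 1⟩

lemma wg_ne : wg ≠ 0 := by decide
lemma swg_ne : star wg ≠ 0 := by decide

lemma norm_wg : Zsqrtd.norm wg = 5 := by decide
lemma norm_swg : Zsqrtd.norm (star wg) = 5 := by decide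

lemma gi_norm_pow (z : GI) (k : ℕ) : Zsqrtd.norm (z ^ k) = (Zsqrtd.norm z) ^ k := by
  induction k with
  | zero => simp [Zsqrtd.norm]
  | succ k ih => rw [pow_succ, pow_succ, Zsqrtd.norm_mul, ih]

lemma wpow_mod5 (k : ℕ) (hk : 1 ≤ k) :
    (((wg ^ k).re : ZMod 5) = 2 ∧ ((wg ^ k).im : ZMod 5) = 1) ∨
    (((wg ^ k).re : ZMod 5) = 3 ∧ ((wg ^ k).im : ZMod 5) = 4) := by
  induction k with
  | zero => omega
  | succ k ih =>
    rcases Nat.eq_or_lt_of_le hk with h | h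
    · left
      rw [← h]
      constructor <;> decide
    · have hk1 : 1 ≤ k := by omega
      have hre : ((wg ^ (k+1)).re : ZMod 5) = ((wg^k).re : ZMod 5) * 2 - ((wg^k).im : ZMod 5) := by
        rw [pow_succ, Zsqrtd.re_mul]
        show (((wg^k).re * wg.re + (-1) * (wg^k).im * wg.im : ℤ) : ZMod 5) = _
        push_cast [wg]
        ring
      have him : ((wg ^ (k+1)).im : ZMod 5) = ((wg^k).re : ZMod 5) + ((wg^k).im : ZMod 5) * 2 := by
        rw [pow_succ, Zsqrtd.im_mul]
        show (((wg^k).re * wg.im + (wg^k).im * wg.re : ℤ) : ZMod 5) = _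
        push_cast [wg]
        ring
      rcases ih hk1 with ⟨h1, h2⟩ | ⟨h1, h2⟩
      · right
        rw [hre, him, h1, h2]
        constructor <;> decide
      · left
        rw [hre, him, h1, h2]
        constructor <;> decide

lemma wpow_im_ne (k : ℕ) (hk : 1 ≤ k) : (wg ^ k).im ≠ 0 := by
  intro h
  rcases wpow_mod5 k hk with ⟨_, h2⟩ | ⟨_, h2⟩ <;> rw [h] at h2 <;> simp at h2 <;> exact absurd h2 (by decide)

def zg (n a : ℕ) : GI := wg ^ a * (star wg) ^ (n - a)

lemma zg_norm (n a : ℕ) (ha : a ≤ n) :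
    (zg n a).re ^ 2 + (zg n a).im ^ 2 = 5 ^ n := by
  have h : Zsqrtd.norm (zg n a) = 5 ^ n := by
    rw [zg, Zsqrtd.norm_mul, gi_norm_pow, gi_norm_pow, norm_wg, norm_swg, ← pow_add]
    congr 1
    omega
  rw [← h, Zsqrtd.norm_def]
  ring

lemma zg_inj (n : ℕ) : ∀ a ≤ n, ∀ b ≤ n, zg n a = zg n b → a = b := by
  have key : ∀ a b, a < b → b ≤ n → zg n a ≠ zg n b := by
    intro a b hab hbn h
    set d := b - a with hd
    have hd1 : 1 ≤ d := by omega
    have e1 : zg n a = (wg ^ a * (star wg) ^ (n - b)) * (star wg) ^ d := by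
      rw [zg, mul_assoc, ← pow_add]
      congr 2
      omega
    have e2 : zg n b = (wg ^ a * (star wg) ^ (n - b)) * wg ^ d := by
      rw [zg, show b = a + d by omega, pow_add]
      ring
    rw [e1, e2] at h
    have hc : (wg ^ a * (star wg) ^ (n - b)) ≠ 0 :=
      mul_ne_zero (pow_ne_zero _ wg_ne) (pow_ne_zero _ swg_ne)
    have h2 : (star wg) ^ d = wg ^ d := mul_left_cancel₀ hc h
    rw [← star_pow] at h2
    have him := congrArg Zsqrtd.im h2
    rw [Zsqrtd.im_star] at him
    have : (wg ^ d).im = 0 := by omega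
    exact wpow_im_ne d hd1 this
  intro a ha b hb h
  rcases lt_trichotomy a b with hlt | heq | hgt
  · exact absurd h (key a b hlt hb)
  · exact heq
  · exact absurd h.symm (key b a hgt ha)

lemma Zyg_abs_le_sq (x : ℤ) : |x| ≤ x^2 := by
  rcases eq_or_lt_of_le (abs_nonneg x) with h | h
  · have hx : x = 0 := abs_eq_zero.mp h.symm
    simp [hx]
  · have h1 : 1 ≤ |x| := h
    calc |x| = |x| * 1 := (mul_one _).symm
      _ ≤ |x| * |x| := mul_le_mul_of_nonneg_left h1 (abs_nonneg x)
      _ = x^2 := by rw [abs_mul_abs_self, sq]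

def ZygS (n : ℕ) : Finset (ℤ × ℤ) :=
  (Finset.Icc ((-(5^n:ℤ), -(5^n:ℤ)) : ℤ × ℤ) (((5^n:ℤ), (5^n:ℤ)) : ℤ × ℤ)).filter
    (fun m => m.1^2 + m.2^2 = 5^n)

lemma mem_ZygS (n : ℕ) (m : ℤ × ℤ) : m ∈ ZygS n ↔ m.1^2 + m.2^2 = (5^n : ℤ) := by
  rw [ZygS, Finset.mem_filter]
  constructor
  · exact fun h => h.2
  · intro h
    refine ⟨?_, h⟩
    rw [Finset.mem_Icc]
    have hy := sq_nonneg m.2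
    have hx := sq_nonneg m.1
    have h1 : |m.1| ≤ 5^n := le_trans (Zyg_abs_le_sq m.1) (by linarith)
    have h2 : |m.2| ≤ 5^n := le_trans (Zyg_abs_le_sq m.2) (by linarith)
    obtain ⟨h1a, h1b⟩ := abs_le.mp h1
    obtain ⟨h2a, h2b⟩ := abs_le.mp h2
    exact ⟨⟨h1a, h2a⟩, ⟨h1b, h2b⟩⟩

lemma ZygS_card (n : ℕ) : n + 1 ≤ (ZygS n).card := by
  have h : (Finset.range (n+1)).card ≤ (ZygS n).card := by
    apply Finset.card_le_card_of_injOn (fun a => ((zg n a).re, (zg n a).im))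
    · intro a ha
      simp only [Finset.coe_range, Set.mem_Iio] at ha
      rw [Finset.mem_coe, mem_ZygS]
      exact zg_norm n a (by omega)
    · intro a ha b hb hab
      simp only [Finset.coe_range, Set.mem_Iio] at ha hb
      simp only [Prod.mk.injEq] at hab
      exact zg_inj n a (by omega) b (by omega) (Zsqrtd.ext hab.1 hab.2)
  simpa using h

/-! ### The main integral formula -/

lemma Zyg_main_integral (lam : ℤ) (hlam : 0 < lam) (S : Finset (ℤ × ℤ))
    (hS : ∀ m : ℤ × ℤ, m ∈ S ↔ m.1^2 + m.2^2 = lam) (hcard : 0 < S.card) :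
    ∫ x in ZygI2, ‖∑ m ∈ S, ((1/Real.sqrt S.card : ℝ) : ℂ) * ZygF m x‖^4
      = 3 - 3 / (S.card : ℝ) := by
  set c : ℝ := 1/Real.sqrt S.card with hc
  have hNR : (0:ℝ) < (S.card : ℝ) := by exact_mod_cast hcard
  have hpt : ∀ x : ℝ × ℝ, ((‖∑ m ∈ S, (c:ℂ) * ZygF m x‖^4 : ℝ) : ℂ)
      = ((∑ m ∈ S, (c:ℂ) * ZygF m x) * (starRingEnd ℂ) (∑ m ∈ S, (c:ℂ) * ZygF m x))^2 := by
    intro x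
    rw [Complex.mul_conj, Complex.normSq_eq_norm_sq]
    push_cast
    ring
  have hC : ((∫ x in ZygI2, ‖∑ m ∈ S, (c:ℂ) * ZygF m x‖^4 : ℝ) : ℂ)
      = (c:ℂ)^4 * (3*(S.card:ℂ)^2 - 3*(S.card:ℂ)) := by
    calc ((∫ x in ZygI2, ‖∑ m ∈ S, (c:ℂ) * ZygF m x‖^4 : ℝ) : ℂ)
        = ∫ x in ZygI2, ((‖∑ m ∈ S, (c:ℂ) * ZygF m x‖^4 : ℝ) : ℂ) := (integral_ofReal).symm
      _ = ∫ x in ZygI2, ((∑ m ∈ S, (c:ℂ) * ZygF m x) *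
            (starRingEnd ℂ) (∑ m ∈ S, (c:ℂ) * ZygF m x))^2 := by
          exact integral_congr_ae (Filter.Eventually.of_forall (fun x => hpt x))
      _ = ∫ x in ZygI2, (∑ m1 ∈ S, ∑ m2 ∈ S, ∑ m3 ∈ S, ∑ m4 ∈ S,
            (c:ℂ)^4 * ZygF (m1 + m2 - m3 - m4) x) := by
          exact integral_congr_ae (Filter.Eventually.of_forall
            (fun x => Zyg_expand_pointwise S c x))
      _ = (c:ℂ)^4 * ∑ m1 ∈ S, ∑ m2 ∈ S, ∑ m3 ∈ S, ∑ m4 ∈ S,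
            (if m1 + m2 = m3 + m4 then (1:ℂ) else 0) := Zyg_integral_quad_sum S c
      _ = (c:ℂ)^4 * (3*(S.card:ℂ)^2 - 3*(S.card:ℂ)) := by
          rw [Zyg_count_quad lam hlam S hS]
  have hreal : c^4 * (3*(S.card:ℝ)^2 - 3*(S.card:ℝ)) = 3 - 3/(S.card:ℝ) := by
    have hsq : c^2 = 1/(S.card:ℝ) := by
      rw [hc, div_pow, one_pow, Real.sq_sqrt hNR.le]
    have hc4 : c^4 = 1/(S.card:ℝ)^2 := by
      rw [show c^4 = (c^2)^2 by ring, hsq, div_pow, one_pow]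
    rw [hc4]
    field_simp
  have hfin : ((∫ x in ZygI2, ‖∑ m ∈ S, (c:ℂ) * ZygF m x‖^4 : ℝ) : ℂ)
      = ((3 - 3/(S.card:ℝ) : ℝ) : ℂ) := by
    rw [hC, ← hreal]
    push_cast
    ring
  exact_mod_cast hfin


/-! ### The main theorem -/

/-- Sharpness of the constant `3` in Zygmund's inequality on the square torus: there are
`L²`-normalized trigonometric polynomials with frequencies on circles `S_{λ_n}` whose
`L⁴([0,1]²)` norms to the fourth power converge to `3`. -/
theorem zygmund_constant_sharp :
    ∃ (lam : ℕ → ℕ) (S : ℕ → Finset (ℤ × ℤ)) (a : ℕ → (ℤ × ℤ) → ℂ),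
      (∀ n, 0 < lam n) ∧
      (∀ n, ∀ m : ℤ × ℤ, m ∈ S n ↔ m.1 ^ 2 + m.2 ^ 2 = (lam n : ℤ)) ∧
      (∀ n, ∑ m ∈ S n, ‖a n m‖ ^ 2 = 1) ∧
      Tendsto
        (fun n => ∫ x in Set.Icc (0 : ℝ) 1 ×ˢ Set.Icc (0 : ℝ) 1,
          ‖∑ m ∈ S n, a n m *
            Complex.exp (2 * (Real.pi : ℂ) * Complex.I *
              ((m.1 : ℂ) * (x.1 : ℂ) + (m.2 : ℂ) * (x.2 : ℂ)))‖ ^ 4)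
        atTop (nhds 3) := by

  refine ⟨fun n => 5^n, fun n => ZygS n, fun n _ => ((1/Real.sqrt (ZygS n).card : ℝ) : ℂ),
    fun n => pow_pos (by norm_num) n, ?_, ?_, ?_⟩
  · intro n m
    rw [mem_ZygS]
    push_cast
    rfl
  · intro n
    have hcard : 0 < (ZygS n).card := by have := ZygS_card n; omega
    have hNR : (0:ℝ) < ((ZygS n).card : ℝ) := by exact_mod_cast hcard
    rw [Finset.sum_const]
    rw [nsmul_eq_mul]
    rw [Complex.norm_real, Real.norm_eq_abs, abs_of_nonneg (by positivity)]
    rw [div_pow, one_pow, Real.sq_sqrt hNR.le]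
    field_simp
  · have hval : ∀ n, (∫ x in Set.Icc (0 : ℝ) 1 ×ˢ Set.Icc (0 : ℝ) 1,
        ‖∑ m ∈ ZygS n, ((1/Real.sqrt (ZygS n).card : ℝ) : ℂ) *
          Complex.exp (2 * (Real.pi : ℂ) * Complex.I *
            ((m.1 : ℂ) * (x.1 : ℂ) + (m.2 : ℂ) * (x.2 : ℂ)))‖ ^ 4)
        = 3 - 3 / ((ZygS n).card : ℝ) := by
      intro n
      have hcard : 0 < (ZygS n).card := by have := ZygS_card n; omega
      have hlam : (0:ℤ) < 5^n := pow_pos (by norm_num) n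
      exact Zyg_main_integral (5^n) hlam (ZygS n) (mem_ZygS n) hcard
    simp only [hval]
    have hlow : Tendsto (fun n : ℕ => 3 - 3 / ((n:ℝ) + 1)) atTop (nhds 3) := by
      have h0 : Tendsto (fun n : ℕ => 3 / ((n:ℝ) + 1)) atTop (nhds 0) := by
        have := tendsto_one_div_add_atTop_nhds_zero_nat (𝕜 := ℝ)
        have h3 : Tendsto (fun n : ℕ => 3 * (1 / ((n:ℝ) + 1))) atTop (nhds (3 * 0)) :=
          this.const_mul 3
        simpa [div_eq_mul_inv] using h3
      have := tendsto_const_nhds (x := (3:ℝ)) (f := atTop (α := ℕ)) |>.sub h0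
      simpa using this
    refine tendsto_of_tendsto_of_tendsto_of_le_of_le hlow tendsto_const_nhds ?_ ?_
    · intro n
      have hcard : (n:ℝ) + 1 ≤ ((ZygS n).card : ℝ) := by
        have := ZygS_card n
        exact_mod_cast this
      have hpos : (0:ℝ) < (n:ℝ) + 1 := by positivity
      have : 3 / ((ZygS n).card : ℝ) ≤ 3 / ((n:ℝ) + 1) := by
        gcongr
      linarith
    · intro n
      have hcard : 0 < (ZygS n).card := by have := ZygS_card n; omega
      have hNR : (0:ℝ) < ((ZygS n).card : ℝ) := by exact_mod_cast hcard
      have : 0 ≤ 3 / ((ZygS n).card : ℝ) := by positivity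
      linarith

end
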